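/- Let n > 1, p prime with p ∤ n, and 2 ≤ m ≤ n-1, with α(i,j) = i - pj + n⌈(pj-i)/n⌉. Since the values α(m-1,0), α(m-1,1), ..., α(m-1,m-1) are m distinct integers in [0, n-1], there exists a permutation δ of {0,1,...,m-1} such that m-1-i ≤ α(m-1, δ(i)) for all 0 ≤ i ≤ m-1 (equivalently, Σ_i α(i,δ(i)) achieves its minimum with χ(i,δ(i)) = 0 for all i). -/

import Mathlib

/-- Existence of a permutation `δ` with `m-1-i ≤ α(m-1, δ(i))` for all `i`. -/
theorem exists_minimal_permutation (n p : ℤ) (hn : 1 < n) (hp : Prime p)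
    (hpn : ¬ p ∣ n) (m : ℕ) (hm0 : 2 ≤ m) (hm1 : (m : ℤ) ≤ n - 1)
    (α : ℤ → ℤ → ℤ)
    (hα : ∀ i j : ℤ, α i j = i - p * j + n * ⌈((p * j - i : ℤ) : ℚ) / (n : ℚ)⌉) :
    ∃ δ : Equiv.Perm (Fin m),
      ∀ i : Fin m, (m : ℤ) - 1 - (i : ℕ) ≤ α ((m : ℤ) - 1) ((δ i : ℕ) : ℤ) := by
  have hn0 : (0:ℤ) < n := by linarith
  have hnQ : (0:ℚ) < (n:ℚ) := by exact_mod_cast hn0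
  set f : Fin m → ℤ := fun j => α ((m:ℤ) - 1) ((j : ℕ) : ℤ) with hf
  -- nonnegativity
  have hnonneg : ∀ j : Fin m, 0 ≤ f j := by
    intro j
    have := hα ((m:ℤ) - 1) ((j:ℕ) : ℤ)
    set x : ℤ := p * ((j:ℕ):ℤ) - ((m:ℤ) - 1) with hx
    have hle : ((x:ℚ)) ≤ (⌈(x:ℚ) / (n:ℚ)⌉ : ℚ) * (n:ℚ) := by
      have h1 : (x:ℚ) / (n:ℚ) ≤ (⌈(x:ℚ) / (n:ℚ)⌉ : ℚ) := Int.le_ceil _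
      exact (div_le_iff₀ hnQ).mp h1
    have hle' : x ≤ ⌈(x:ℚ) / (n:ℚ)⌉ * n := by exact_mod_cast hle
    simp only [hf]
    rw [this]
    linarith
  -- injectivity
  have hinj : Function.Injective f := by
    intro j k hjk
    simp only [hf] at hjk
    rw [hα, hα] at hjk
    have hdvd : n ∣ p * (((k:ℕ):ℤ) - ((j:ℕ):ℤ)) := by
      refine ⟨⌈((p * ((k:ℕ):ℤ) - ((m:ℤ)-1) : ℤ) : ℚ) / (n:ℚ)⌉ -
        ⌈((p * ((j:ℕ):ℤ) - ((m:ℤ)-1) : ℤ) : ℚ) / (n:ℚ)⌉, ?_⟩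
      linarith [hjk]
    have hcop : IsCoprime n p := ((hp.coprime_iff_not_dvd).mpr hpn).symm
    have hdvd2 : n ∣ (((k:ℕ):ℤ) - ((j:ℕ):ℤ)) := hcop.dvd_of_dvd_mul_left hdvd
    have hj : ((j:ℕ):ℤ) < n := by
      have := j.isLt; omega
    have hk : ((k:ℕ):ℤ) < n := by
      have := k.isLt; omega
    have h0 : (((k:ℕ):ℤ) - ((j:ℕ):ℤ)) = 0 := by
      rcases hdvd2 with ⟨t, ht⟩
      rcases lt_trichotomy t 0 with h | h | h
      · nlinarith
      · simp [ht, h]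
      · nlinarith
    have : (j:ℕ) = (k:ℕ) := by omega
    exact Fin.ext this
  -- sorting
  set σ := Tuple.sort f with hσ
  have hmono : Monotone (f ∘ σ) := Tuple.monotone_sort f
  have hsm : StrictMono (f ∘ σ) :=
    hmono.strictMono_of_injective (hinj.comp σ.injective)
  have key : ∀ k : ℕ, ∀ hk : k < m, (k:ℤ) ≤ f (σ ⟨k, hk⟩) := by
    intro k
    induction k with
    | zero => intro hk; exact_mod_cast hnonneg _
    | succ k ih =>
      intro hk
      have hk' : k < m := by omega
      have h1 : f (σ ⟨k, hk'⟩) < f (σ ⟨k+1, hk⟩) := by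
        have : (⟨k, hk'⟩ : Fin m) < ⟨k+1, hk⟩ := by simp [Fin.lt_def]
        exact hsm this
      have h2 := ih hk'
      have h3 := Int.add_one_le_iff.mpr h1
      push_cast
      linarith
  refine ⟨Fin.revPerm.trans σ, ?_⟩
  intro i
  have hi := i.isLt
  have h1 : ((i.rev : ℕ) : ℤ) ≤ f (σ i.rev) := by
    have := key (i.rev : ℕ) i.rev.isLt
    exact this
  have h2 : ((i.rev : ℕ) : ℤ) = (m:ℤ) - 1 - (i:ℕ) := by
    have : (i.rev : ℕ) = m - ((i:ℕ) + 1) := Fin.val_rev i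
    omega
  have h3 : (Fin.revPerm.trans σ) i = σ i.rev := by simp
  rw [h3]
  calc (m:ℤ) - 1 - (i:ℕ) = ((i.rev : ℕ) : ℤ) := h2.symm
    _ ≤ f (σ i.rev) := h1
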